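/- arXiv:2312.08008 — 2 statements merged into one kernel-verified Lean document; each statement's English description precedes it below -/
import Mathlib

section
/- For any vector R in R^n and η > 0, the normalization factor x of the Tsallis smoothing, i.e., the unique real x > max_i R_i such that sum_i 4/(η(R_i - x))² = 1, satisfies 2/η ≤ x - max_i R_i ≤ 2√n/η. -/
/-- For R ∈ ℝⁿ and η > 0, the Tsallis-smoothing normalization factor x, i.e. the real
number x > max_i R i with ∑ i, 4/(η(R i - x))² = 1, satisfies
2/η ≤ x - max_i R i ≤ 2√n/η. -/
theorem tsallis_normalization_factor_bound (n : ℕ) (R : Fin n → ℝ) (η M x : ℝ)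
    (hη : 0 < η)
    (hM : IsGreatest (Set.range R) M)
    (hx : M < x)
    (hsum : ∑ i, 4 / (η * (R i - x)) ^ 2 = 1) :
    2 / η ≤ x - M ∧ x - M ≤ 2 * Real.sqrt n / η := by
  set s := x - M with hs
  have hs0 : 0 < s := by simp [hs]; linarith
  have hηs : 0 < η * s := by positivity
  -- each term bound structure
  have hterm_le : ∀ i, 4 / (η * (R i - x)) ^ 2 ≤ 4 / (η * s) ^ 2 := by
    intro i
    have hRi : R i ≤ M := hM.2 ⟨i, rfl⟩
    have h1 : (η * s) ^ 2 ≤ (η * (R i - x)) ^ 2 := by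
      have : η * s ≤ η * (x - R i) := by nlinarith
      have h2 : (η * s) ^ 2 ≤ (η * (x - R i)) ^ 2 := by nlinarith
      calc (η * s) ^ 2 ≤ (η * (x - R i)) ^ 2 := h2
        _ = (η * (R i - x)) ^ 2 := by ring
    exact div_le_div_of_nonneg_left (by norm_num) (by positivity) h1
  constructor
  · -- lower bound: the max term alone is ≤ 1
    obtain ⟨i, hi⟩ := hM.1
    have hle : 4 / (η * (R i - x)) ^ 2 ≤ 1 := by
      rw [← hsum]
      apply Finset.single_le_sum (f := fun j => 4 / (η * (R j - x)) ^ 2)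
      · intro j _
        have : R j ≤ M := hM.2 ⟨j, rfl⟩
        have : (η * (R j - x)) ^ 2 > 0 := by
          have : R j - x ≠ 0 := by intro h; nlinarith
          positivity
        positivity
      · exact Finset.mem_univ i
    rw [hi] at hle
    have heq : (η * (M - x)) ^ 2 = (η * s) ^ 2 := by
      simp only [hs]; ring
    rw [heq] at hle
    have h4 : 4 ≤ (η * s) ^ 2 := by
      rw [div_le_one (by positivity)] at hle; exact hle
    have h2 : 2 ≤ η * s := by nlinarith
    rw [div_le_iff₀ hη]; linarith
  · -- upper bound
    have hsum_le : (1:ℝ) ≤ n * (4 / (η * s) ^ 2) := by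
      calc (1:ℝ) = ∑ i, 4 / (η * (R i - x)) ^ 2 := hsum.symm
        _ ≤ ∑ _i : Fin n, 4 / (η * s) ^ 2 := Finset.sum_le_sum fun i _ => hterm_le i
        _ = n * (4 / (η * s) ^ 2) := by simp [Finset.sum_const]
    have h4n : (η * s) ^ 2 ≤ 4 * n := by
      have hp : (0:ℝ) < (η * s) ^ 2 := by positivity
      have hmul := mul_le_mul_of_nonneg_right hsum_le hp.le
      field_simp at hmul
      linarith
    have hsq : η * s ≤ 2 * Real.sqrt n := by
      have : η * s ≤ Real.sqrt (4 * n) := by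
        have := Real.sqrt_le_sqrt h4n
        rwa [Real.sqrt_sq hηs.le] at this
      have h4 : Real.sqrt (4 * n) = 2 * Real.sqrt n := by
        rw [show (4:ℝ) * n = 2^2 * n by ring, Real.sqrt_mul (by positivity), Real.sqrt_sq (by norm_num)]
      linarith [this, h4.le]
    rw [le_div_iff₀ hη]; linarith
end

section
/- The Tsallis smoothing map σ_η : R^n → Δ^n is Lipschitz with respect to the Euclidean norm with constant 2√2 · η · n: for all R, R' ∈ R^n, ‖σ_η(R) - σ_η(R')‖₂ ≤ 2√2 · η · n · ‖R - R'‖₂. -/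
/-- The Tsallis smoothing map σ_η, given componentwise by σ_η(R)_i = 4/(η(R i - x))²
with x > max R the normalization factor (∑ i, 4/(η(R i - x))² = 1), is Lipschitz w.r.t.
the Euclidean norm with constant 2√2 η n. -/
theorem tsallis_smoothing_lipschitz (n : ℕ) (η : ℝ) (hη : 0 < η)
    (R R' : Fin n → ℝ) (x x' : ℝ)
    (hx : ∀ i, R i < x) (hx' : ∀ i, R' i < x')
    (hs : ∑ i, 4 / (η * (R i - x)) ^ 2 = 1)
    (hs' : ∑ i, 4 / (η * (R' i - x')) ^ 2 = 1) :
    Real.sqrt (∑ i, (4 / (η * (R i - x)) ^ 2 - 4 / (η * (R' i - x')) ^ 2) ^ 2)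
      ≤ 2 * Real.sqrt 2 * η * n * Real.sqrt (∑ i, (R i - R' i) ^ 2) := by
  -- n is positive
  have hn : 0 < n := by
    rcases Nat.eq_zero_or_pos n with h | h
    · subst h; simp at hs
    · exact h
  have hne : Nonempty (Fin n) := Fin.pos_iff_nonempty.mp hn
  set a : Fin n → ℝ := fun i => x - R i with ha_def
  set b : Fin n → ℝ := fun i => x' - R' i with hb_def
  have hapos : ∀ i, 0 < a i := fun i => sub_pos.mpr (hx i)
  have hbpos : ∀ i, 0 < b i := fun i => sub_pos.mpr (hx' i)
  -- each term is at most 1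
  have hterm : ∀ i, 4 / (η * (R i - x)) ^ 2 ≤ 1 := by
    intro i
    rw [← hs]
    exact Finset.single_le_sum (f := fun j => 4 / (η * (R j - x)) ^ 2)
      (fun j _ => by positivity) (Finset.mem_univ i)
  have hterm' : ∀ i, 4 / (η * (R' i - x')) ^ 2 ≤ 1 := by
    intro i
    rw [← hs']
    exact Finset.single_le_sum (f := fun j => 4 / (η * (R' j - x')) ^ 2)
      (fun j _ => by positivity) (Finset.mem_univ i)
  -- lower bounds on a, b : 2 ≤ η * a i
  have ha2 : ∀ i, 2 ≤ η * a i := by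
    intro i
    have h := hterm i
    have hden : (η * (R i - x)) ^ 2 = (η * a i) ^ 2 := by simp only [ha_def]; ring
    rw [hden, div_le_one (pow_pos (mul_pos hη (hapos i)) 2)] at h
    nlinarith [mul_pos hη (hapos i)]
  have hb2 : ∀ i, 2 ≤ η * b i := by
    intro i
    have h := hterm' i
    have hden : (η * (R' i - x')) ^ 2 = (η * b i) ^ 2 := by simp only [hb_def]; ring
    rw [hden, div_le_one (pow_pos (mul_pos hη (hbpos i)) 2)] at h
    nlinarith [mul_pos hη (hbpos i)]
  set c : Fin n → ℝ := fun i => (a i + b i) / ((a i) ^ 2 * (b i) ^ 2) with hc_def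
  have hcpos : ∀ i, 0 < c i := by
    intro i
    have := hapos i; have := hbpos i
    simp only [hc_def]
    positivity
  -- key identity
  have hid : ∀ i, 4 / (η * (R i - x)) ^ 2 - 4 / (η * (R' i - x')) ^ 2
      = 4 / η ^ 2 * (((R i - R' i) - (x - x')) * c i) := by
    intro i
    have h1 : a i ≠ 0 := ne_of_gt (hapos i)
    have h2 : b i ≠ 0 := ne_of_gt (hbpos i)
    have h3 : R i - x ≠ 0 := by simp only [ha_def] at h1; intro h; apply h1; linarith
    have h4 : R' i - x' ≠ 0 := by simp only [hb_def] at h2; intro h; apply h2; linarith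
    simp only [hc_def, ha_def, hb_def]
    have h5 : x - R i ≠ 0 := h1
    have h6 : x' - R' i ≠ 0 := h2
    field_simp
    ring
  -- sum of differences is zero
  have hsum0 : ∑ i, ((R i - R' i) - (x - x')) * c i = 0 := by
    have h : ∑ i, (4 / (η * (R i - x)) ^ 2 - 4 / (η * (R' i - x')) ^ 2) = 0 := by
      rw [Finset.sum_sub_distrib, hs, hs']; ring
    rw [Finset.sum_congr rfl (fun i _ => hid i), ← Finset.mul_sum] at h
    have h4 : (4 : ℝ) / η ^ 2 ≠ 0 := by positivity
    exact (mul_eq_zero.mp h).resolve_left h4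
  set M : ℝ := Real.sqrt (∑ i, (R i - R' i) ^ 2) with hM_def
  have hMnn : 0 ≤ M := Real.sqrt_nonneg _
  have hdM : ∀ i, |R i - R' i| ≤ M := by
    intro i
    have h : (R i - R' i) ^ 2 ≤ ∑ j, (R j - R' j) ^ 2 :=
      Finset.single_le_sum (f := fun j => (R j - R' j) ^ 2)
        (fun j _ => sq_nonneg _) (Finset.mem_univ i)
    calc |R i - R' i| = Real.sqrt ((R i - R' i) ^ 2) := (Real.sqrt_sq_eq_abs _).symm
      _ ≤ M := Real.sqrt_le_sqrt h
  -- |x - x'| ≤ M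
  have hδ : |x - x'| ≤ M := by
    rw [abs_le]
    constructor
    · by_contra h
      push_neg at h
      have : ∑ i, ((R i - R' i) - (x - x')) * c i > 0 := by
        apply Finset.sum_pos _ Finset.univ_nonempty
        intro i _
        apply mul_pos _ (hcpos i)
        have := abs_le.mp (hdM i)
        linarith [this.1]
      linarith [hsum0]
    · by_contra h
      push_neg at h
      have : ∑ i, ((R i - R' i) - (x - x')) * c i < 0 := by
        apply Finset.sum_neg _ Finset.univ_nonempty
        intro i _
        apply mul_neg_of_neg_of_pos _ (hcpos i)
        have := abs_le.mp (hdM i)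
        linarith [this.2]
      linarith [hsum0]
  -- upper bound on c i
  have hcub : ∀ i, c i ≤ η ^ 3 / 4 := by
    intro i
    have h1 := ha2 i; have h2 := hb2 i
    have ha := hapos i; have hb := hbpos i
    simp only [hc_def]
    rw [div_le_div_iff₀ (by positivity) (by norm_num)]
    nlinarith [mul_pos ha hb, mul_le_mul h1 h2 (by norm_num) (le_of_lt (mul_pos hη ha)),
      mul_nonneg (mul_nonneg ha.le hb.le) (sub_nonneg.mpr h1),
      mul_nonneg (mul_nonneg ha.le hb.le) (sub_nonneg.mpr h2),
      mul_nonneg (mul_nonneg (mul_nonneg ha.le ha.le) hb.le) (sub_nonneg.mpr h2),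
      mul_nonneg (mul_nonneg (mul_nonneg ha.le hb.le) hb.le) (sub_nonneg.mpr h1)]
  -- per coordinate squared bound
  have hWsq : ∀ i, (4 / (η * (R i - x)) ^ 2 - 4 / (η * (R' i - x')) ^ 2) ^ 2
      ≤ 4 * η ^ 2 * M ^ 2 := by
    intro i
    rw [hid i]
    have he : |(R i - R' i) - (x - x')| ≤ 2 * M := by
      calc |(R i - R' i) - (x - x')| ≤ |R i - R' i| + |x - x'| := abs_sub _ _
        _ ≤ 2 * M := by linarith [hdM i, hδ]
    have he2 : ((R i - R' i) - (x - x')) ^ 2 ≤ 4 * M ^ 2 := by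
      nlinarith [sq_abs ((R i - R' i) - (x - x')), abs_nonneg ((R i - R' i) - (x - x'))]
    have hc2 : (c i) ^ 2 ≤ η ^ 6 / 16 := by
      nlinarith [hcub i, (hcpos i).le, hη]
    have hη4 : (0:ℝ) < η ^ 4 := by positivity
    have : (4 / η ^ 2 * (((R i - R' i) - (x - x')) * c i)) ^ 2
        = 16 * (((R i - R' i) - (x - x')) ^ 2 * (c i) ^ 2) / η ^ 4 := by
      field_simp; ring
    rw [this, div_le_iff₀ hη4]
    nlinarith [mul_le_mul he2 hc2 (sq_nonneg (c i)) (by positivity : (0:ℝ) ≤ 4 * M ^ 2),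
      sq_nonneg M, sq_nonneg η, hη]
  -- sum bound
  have hsum : ∑ i, (4 / (η * (R i - x)) ^ 2 - 4 / (η * (R' i - x')) ^ 2) ^ 2
      ≤ n * (4 * η ^ 2 * M ^ 2) := by
    calc ∑ i, (4 / (η * (R i - x)) ^ 2 - 4 / (η * (R' i - x')) ^ 2) ^ 2
        ≤ ∑ _i : Fin n, (4 * η ^ 2 * M ^ 2) := Finset.sum_le_sum (fun i _ => hWsq i)
      _ = n * (4 * η ^ 2 * M ^ 2) := by simp [Finset.sum_const, Finset.card_univ]
  have hM2 : M ^ 2 = ∑ i, (R i - R' i) ^ 2 := by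
    rw [hM_def, Real.sq_sqrt]
    exact Finset.sum_nonneg (fun i _ => sq_nonneg _)
  have hK : (0:ℝ) ≤ 2 * Real.sqrt 2 * η * n := by positivity
  have hKsq : (2 * Real.sqrt 2 * η * n) ^ 2 = 8 * η ^ 2 * n ^ 2 := by
    have h2 : Real.sqrt 2 ^ 2 = 2 := Real.sq_sqrt (by norm_num)
    have h3 : (2 * Real.sqrt 2 * η * n) ^ 2 = Real.sqrt 2 ^ 2 * (4 * η ^ 2 * n ^ 2) := by
      ring
    rw [h3, h2]; ring
  have hfin : ∑ i, (4 / (η * (R i - x)) ^ 2 - 4 / (η * (R' i - x')) ^ 2) ^ 2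
      ≤ (2 * Real.sqrt 2 * η * n) ^ 2 * (∑ i, (R i - R' i) ^ 2) := by
    rw [hKsq, ← hM2]
    have hn1 : (1:ℝ) ≤ n := by exact_mod_cast hn
    have hkey : (0:ℝ) ≤ η ^ 2 * M ^ 2 * n * (2 * n - 1) :=
      mul_nonneg (mul_nonneg (mul_nonneg (sq_nonneg η) (sq_nonneg M))
        (by linarith : (0:ℝ) ≤ n)) (by linarith : (0:ℝ) ≤ 2 * n - 1)
    linarith [hsum, hkey]
  calc Real.sqrt (∑ i, (4 / (η * (R i - x)) ^ 2 - 4 / (η * (R' i - x')) ^ 2) ^ 2)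
      ≤ Real.sqrt ((2 * Real.sqrt 2 * η * n) ^ 2 * (∑ i, (R i - R' i) ^ 2)) :=
        Real.sqrt_le_sqrt hfin
    _ = 2 * Real.sqrt 2 * η * n * Real.sqrt (∑ i, (R i - R' i) ^ 2) := by
        rw [Real.sqrt_mul (sq_nonneg _), Real.sqrt_sq hK]
end
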